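/- Let w ∈ W̃_{D_m} and 0 ≤ k ≤ m, and suppose w satisfies (SP1'), (SP2'), and (SP3') at k. Let α̃ := α̃_{i,j;d} be an affine root (j ∉ {i, i*}) such that s_{α̃}w satisfies (SP1') at k but fails (SP2') or fails (SP3') at k. Then ν_k^w(i) ∈ {1/2, 1, 3/2} and ν_k^w(j) ∈ {1/2, 1, 3/2}. -/

import Mathlib

open Finset

namespace TypeD

abbrev VecZ (m : ℕ) := Fin (2 * m) → ℤ
abbrev VecR (m : ℕ) := Fin (2 * m) → ℝ

/-- `σ ∈ S_{2m}^∘`: even, and commuting with `j ↦ j*`. -/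
def InSO (m : ℕ) (σ : Equiv.Perm (Fin (2 * m))) : Prop :=
  Equiv.Perm.sign σ = 1 ∧ ∀ j, σ j.rev = (σ j).rev

/-- `t ∈ X_{*D_m}`. -/
def InXD (m : ℕ) (t : VecZ m) : Prop :=
  ∀ j j' : Fin (2 * m), t j + t j.rev = t j' + t j'.rev

/-- `ω_i ∈ ℤ^{2m}`: writing `i = 2m·b + c` with `0 ≤ c < 2m`, the first `c` entries
are `-b-1` and the rest are `-b`. -/
def omegaD (m : ℕ) (i : ℤ) (j : Fin (2 * m)) : ℤ :=
  if ((j : ℕ) : ℤ) < i % (2 * (m : ℤ)) then -(i / (2 * (m : ℤ))) - 1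
  else -(i / (2 * (m : ℤ)))

/-- `μ_k^w = w·ω_k − ω_k` for `w = t_t σ`. -/
def muD (m : ℕ) (t : VecZ m) (σ : Equiv.Perm (Fin (2 * m))) (k : ℤ) (j : Fin (2 * m)) : ℤ :=
  t j + omegaD m k (σ⁻¹ j) - omegaD m k j

/-- `ν_k^w = (μ_k^w + μ_{−k}^w)/2`, real-valued. -/
noncomputable def nuD (m : ℕ) (t : VecZ m) (σ : Equiv.Perm (Fin (2 * m))) (k : ℤ) (j : Fin (2 * m)) : ℝ :=
  ((muD m t σ k j + muD m t σ (-k) j : ℤ) : ℝ) / 2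

/-- `c_k^w = #{j : μ_k^w(j) = 2}`. -/
noncomputable def cD (m : ℕ) (t : VecZ m) (σ : Equiv.Perm (Fin (2 * m))) (k : ℤ) : ℕ :=
  Set.ncard {j : Fin (2 * m) | muD m t σ k j = 2}

/-- the cocharacter `μ = (2^{(q)}, 1^{(2m−2q)}, 0^{(q)})`. -/
def muQ (m q : ℕ) (j : Fin (2 * m)) : ℤ :=
  if (j : ℕ) < q then 2 else if (j : ℕ) < 2 * m - q then 1 else 0

/-- the coroot lattice `Q∨_{D_m}`. -/
def QveeD (m : ℕ) : Set (VecZ m) :=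
  {x | (∀ j, x j + x j.rev = 0) ∧
    Even (∑ j ∈ Finset.univ.filter (fun j : Fin (2 * m) => (j : ℕ) < m), x j)}

/-- `j ∈ A_a` (1-indexed `{1,…,a} ∪ {2m+1−a,…,2m}`). -/
def memA (m a : ℕ) (j : Fin (2 * m)) : Prop := (j : ℕ) < a ∨ 2 * m - a ≤ (j : ℕ)

/-- `j ∈ B_a` (1-indexed `{a+1,…,2m−a}`). -/
def memB (m a : ℕ) (j : Fin (2 * m)) : Prop := a ≤ (j : ℕ) ∧ (j : ℕ) < 2 * m - a

def IsIntVal (x : ℝ) : Prop := ∃ z : ℤ, x = (z : ℝ)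

/-- a half-integer: an element of `(1/2)ℤ ∖ ℤ`. -/
def IsHalfInt (x : ℝ) : Prop := (∃ z : ℤ, x = (z : ℝ) / 2) ∧ ¬ IsIntVal x

/-- `μ_k^w` is self-dual, i.e. `μ_k^w = μ_{−k}^w`. -/
def SelfDual (m : ℕ) (t : VecZ m) (σ : Equiv.Perm (Fin (2 * m))) (k : ℤ) : Prop :=
  ∀ j, muD m t σ k j = muD m t σ (-k) j

/-- (SP1) at `k`. -/
def SP1 (m : ℕ) (t : VecZ m) (σ : Equiv.Perm (Fin (2 * m))) (k : ℤ) : Prop :=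
  (∀ j, muD m t σ k j + muD m t σ (-k) j.rev = 2) ∧
  (∀ j, 0 ≤ muD m t σ k j ∧ muD m t σ k j ≤ 2)

/-- (SP2) at `k`. -/
def SP2 (m q : ℕ) (t : VecZ m) (σ : Equiv.Perm (Fin (2 * m))) (k : ℤ) : Prop :=
  cD m t σ k ≤ q

/-- (SP3) at `k`. -/
def SP3 (m q : ℕ) (t : VecZ m) (σ : Equiv.Perm (Fin (2 * m))) (k : ℕ) : Prop :=
  (SelfDual m t σ (k : ℤ) ∧ (fun j => muD m t σ (k : ℤ) j - muQ m q j) ∉ QveeD m) →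
    ∃ j₁ j₂ : Fin (2 * m), memA m k j₁ ∧ memB m k j₂ ∧
      muD m t σ (k : ℤ) j₁ = 1 ∧ muD m t σ (k : ℤ) j₂ = 1

/-- (SP1') at `k`. -/
def SP1' (m : ℕ) (t : VecZ m) (σ : Equiv.Perm (Fin (2 * m))) (k : ℤ) : Prop :=
  (∀ j, nuD m t σ k j + nuD m t σ k j.rev = 2) ∧
  (∀ j, 0 ≤ nuD m t σ k j ∧ nuD m t σ k j ≤ 2)

/-- (SP2') at `k`. -/
def SP2' (m q : ℕ) (t : VecZ m) (σ : Equiv.Perm (Fin (2 * m))) (k : ℤ) : Prop :=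
  (Set.ncard {j : Fin (2 * m) | nuD m t σ k j = 2} : ℝ) +
    (Set.ncard {j : Fin (2 * m) | ¬ IsIntVal (nuD m t σ k j)} : ℝ) / 4 ≤ (q : ℝ)

/-- `ν_k^w − μ ∈ Q∨_{D_m}`. -/
def NuCongQvee (m q : ℕ) (t : VecZ m) (σ : Equiv.Perm (Fin (2 * m))) (k : ℤ) : Prop :=
  ∃ y ∈ QveeD m, ∀ j, nuD m t σ k j = ((muQ m q j + y j : ℤ) : ℝ)

/-- (SP3') at `k`. -/
def SP3' (m q : ℕ) (t : VecZ m) (σ : Equiv.Perm (Fin (2 * m))) (k : ℕ) : Prop :=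
  ((∀ j, IsIntVal (nuD m t σ (k : ℤ) j)) ∧ ¬ NuCongQvee m q t σ (k : ℤ)) →
    ∃ j₁ j₂ : Fin (2 * m), memA m k j₁ ∧ memB m k j₂ ∧
      nuD m t σ (k : ℤ) j₁ = 1 ∧ nuD m t σ (k : ℤ) j₂ = 1

/-- the orbit `S_{2m}^∘ · μ` inside `ℝ^{2m}`. -/
def OrbitMu (m q : ℕ) : Set (VecR m) :=
  {x | ∃ σ : Equiv.Perm (Fin (2 * m)), InSO m σ ∧ ∀ j, x j = ((muQ m q (σ⁻¹ j) : ℤ) : ℝ)}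

/-- `Conv(S_{2m}^∘ · μ)`. -/
def ConvMu (m q : ℕ) : Set (VecR m) := convexHull ℝ (OrbitMu m q)

/-- the affine action of `w = t_t σ` on `ℝ^{2m}`. -/
noncomputable def actR (m : ℕ) (t : VecZ m) (σ : Equiv.Perm (Fin (2 * m))) (x : VecR m) (j : Fin (2 * m)) : ℝ :=
  (t j : ℝ) + x (σ⁻¹ j)

/-- the point `a_k = ((−1/2)^{(k)}, 0^{(2m−2k)}, (1/2)^{(k)})`. -/
noncomputable def aD (m k : ℕ) (j : Fin (2 * m)) : ℝ :=
  if (j : ℕ) < k then -(1 / 2) else if (j : ℕ) < 2 * m - k then 0 else 1 / 2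

/-- the point `a_{0'} = (−1, 0^{(2m−2)}, 1)`. -/
noncomputable def a0' (m : ℕ) (j : Fin (2 * m)) : ℝ :=
  if (j : ℕ) = 0 then -1 else if (j : ℕ) = 2 * m - 1 then 1 else 0

/-- the point `a_{m'} = ((−1/2)^{(m−1)}, 1/2, −1/2, (1/2)^{(m−1)})`. -/
noncomputable def am' (m : ℕ) (j : Fin (2 * m)) : ℝ :=
  if (j : ℕ) < m - 1 then -(1 / 2)
  else if (j : ℕ) = m - 1 then 1 / 2
  else if (j : ℕ) = m then -(1 / 2)
  else 1 / 2

/-- `ν_{0'}^w = w·a_{0'} − a_{0'}`. -/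
noncomputable def nu0' (m : ℕ) (t : VecZ m) (σ : Equiv.Perm (Fin (2 * m))) (j : Fin (2 * m)) : ℝ :=
  actR m t σ (a0' m) j - a0' m j

/-- `ν_{m'}^w = w·a_{m'} − a_{m'}`. -/
noncomputable def num' (m : ℕ) (t : VecZ m) (σ : Equiv.Perm (Fin (2 * m))) (j : Fin (2 * m)) : ℝ :=
  actR m t σ (am' m) j - am' m j

/-- membership in the real apartment `{x : x(1)+x(2m) = ⋯ = x(m)+x(m+1)}`. -/
def InApartR (m : ℕ) (x : VecR m) : Prop :=
  ∀ j j' : Fin (2 * m), x j + x j.rev = x j' + x j'.rev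

/-- membership in the base alcove `A_{D_m}`. -/
def InAlcove (m : ℕ) (x : VecR m) : Prop :=
  InApartR m x ∧
  (∀ j0 jt : Fin (2 * m), (j0 : ℕ) = 0 → 1 ≤ (jt : ℕ) → (jt : ℕ) ≤ m →
    x j0 < x jt ∧ x j0.rev - 1 < x jt) ∧
  (∀ j j' : Fin (2 * m), 1 ≤ (j : ℕ) → (j : ℕ) ≤ m - 2 → (j : ℕ) < (j' : ℕ) →
    (j' : ℕ) ≤ m → x j < x j')

/-- `w = t_t σ` is μ-permissible: `w ≡ t_μ mod W_{aff}` (equivalently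
`ν_0^w − μ ∈ Q∨_{D_m}`) and `w·x − x ∈ Conv(S_{2m}^∘ μ)` for all `x` in the base alcove. -/
def MuPermissible (m q : ℕ) (t : VecZ m) (σ : Equiv.Perm (Fin (2 * m))) : Prop :=
  NuCongQvee m q t σ 0 ∧
  ∀ x : VecR m, InAlcove m x → (fun j => actR m t σ x j - x j) ∈ ConvMu m q

/-- the coroot `α∨_{i,j} = e_i − e_j + e_{j*} − e_{i*}`. -/
def corootD (m : ℕ) (i j l : Fin (2 * m)) : ℤ :=
  (if l = i then 1 else 0) - (if l = j then 1 else 0) +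
    (if l = j.rev then 1 else 0) - (if l = i.rev then 1 else 0)

/-- `(t', σ')` represents `s_{α̃_{i,j;d}} · w` for `w = t_t σ`: on the apartment it
acts by `x ↦ w·x − ⟨α̃_{i,j;d}, w·x⟩ α∨_{i,j}`. -/
def IsReflOf (m : ℕ) (i j : Fin (2 * m)) (d : ℤ) (t : VecZ m) (σ : Equiv.Perm (Fin (2 * m)))
    (t' : VecZ m) (σ' : Equiv.Perm (Fin (2 * m))) : Prop :=
  ∀ x : VecR m, InApartR m x → ∀ l,
    actR m t' σ' x l =
      actR m t σ x l - (actR m t σ x i - actR m t σ x j - (d : ℝ)) * (corootD m i j l : ℝ)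

/-- Membership of `i` in `2mℤ ± I`. -/
def FaceIdxD (m : ℕ) (I : Finset ℕ) (i : ℤ) : Prop :=
  ∃ a ∈ I, ∃ b : ℤ, i = 2 * (m : ℤ) * b + (a : ℤ) ∨ i = 2 * (m : ℤ) * b - (a : ℤ)

/-- `v` is a `d`-face of type `(2m, I)`. -/
structure IsFaceD (m : ℕ) (I : Finset ℕ) (d : ℤ) (v : ℤ → VecZ m) : Prop where
  per : ∀ i, FaceIdxD m I i → ∀ j, v (i + 2 * (m : ℤ)) j = v i j - 1
  mono : ∀ i i', FaceIdxD m I i → FaceIdxD m I i' → i ≤ i' → ∀ j, v i' j ≤ v i j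
  sumEq : ∀ i i', FaceIdxD m I i → FaceIdxD m I i' → (∑ j, v i j) - (∑ j, v i' j) = i' - i
  dual : ∀ i, FaceIdxD m I i → ∀ j, v i j + v (-i) j.rev = d

/-- `μ_i^v := v_i − ω_i` for a face `v`. -/
def muFaceD (m : ℕ) (v : ℤ → VecZ m) (i : ℤ) (j : Fin (2 * m)) : ℤ := v i j - omegaD m i j

/-- `ε` of a translation vector: the sum of the first `m` entries mod 2. -/
def epsVec (m : ℕ) (x : VecZ m) : ZMod 2 :=
  ((∑ j ∈ Finset.univ.filter (fun j : Fin (2 * m) => (j : ℕ) < m), x j : ℤ) : ZMod 2)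

/-- membership of `(v, γ)` in `F_{I,D_m}`. -/
def MemFD (m : ℕ) (I : Finset ℕ) (v : ℤ → VecZ m) (γ : ZMod 2) : Prop :=
  (∃ d, IsFaceD m I d v) ∧
  (if 0 ∈ I then
    if m ∈ I then
      (fun j => muFaceD m v 0 j - muFaceD m v (m : ℤ) j) ∈ QveeD m ∧
        γ = epsVec m (fun j => muFaceD m v 0 j)
    else γ = epsVec m (fun j => muFaceD m v 0 j)
  else if m ∈ I then γ = epsVec m (fun j => muFaceD m v (m : ℤ) j)
  else True)

/-- membership of `t_tx σx` in `W_{I,D_m}` (the group conditions on `(tx, σx)` being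
assumed separately): it lies in `W_{aff,D_m}` and fixes `a_k` for all `k ∈ I`. -/
def MemWI (m : ℕ) (I : Finset ℕ) (tx : VecZ m) (σx : Equiv.Perm (Fin (2 * m))) : Prop :=
  tx ∈ QveeD m ∧ ∀ k ∈ I, ∀ j, (tx j : ℝ) + aD m k (σx⁻¹ j) = aD m k j

/-- (SP1) at `k` for a face. -/
def SP1F (m : ℕ) (v : ℤ → VecZ m) (k : ℕ) : Prop :=
  (∀ j, muFaceD m v (k : ℤ) j + muFaceD m v (-(k : ℤ)) j.rev = 2) ∧
  (∀ j, 0 ≤ muFaceD m v (k : ℤ) j ∧ muFaceD m v (k : ℤ) j ≤ 2)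

/-- (SP2) at `k` for a face. -/
def SP2F (m q : ℕ) (v : ℤ → VecZ m) (k : ℕ) : Prop :=
  Set.ncard {j : Fin (2 * m) | muFaceD m v (k : ℤ) j = 2} ≤ q

/-- (SP3) at `k` for a face. -/
def SP3F (m q : ℕ) (v : ℤ → VecZ m) (k : ℕ) : Prop :=
  ((∀ j, muFaceD m v (k : ℤ) j = muFaceD m v (-(k : ℤ)) j) ∧
      (fun j => muFaceD m v (k : ℤ) j - muQ m q j) ∉ QveeD m) →
    ∃ j₁ j₂ : Fin (2 * m), memA m k j₁ ∧ memB m k j₂ ∧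
      muFaceD m v (k : ℤ) j₁ = 1 ∧ muFaceD m v (k : ℤ) j₂ = 1

/-- `(v, γ) ∈ F_{I,D_m}` is μ-spin-permissible. -/
def SpinPermF (m q : ℕ) (I : Finset ℕ) (v : ℤ → VecZ m) (γ : ZMod 2) : Prop :=
  γ = epsVec m (fun j => muQ m q j) ∧ ∀ k ∈ I, SP1F m v k ∧ SP2F m q v k ∧ SP3F m q v k


open scoped Classical

section Aux

variable {m : ℕ}

lemma val_rev (l : Fin (2*m)) : (l.rev : ℕ) = 2*m - 1 - (l:ℕ) := by
  rw [Fin.val_rev]; omega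

lemma rev_ne (l : Fin (2*m)) : l.rev ≠ l := by
  intro h
  have h1 := congrArg Fin.val h
  rw [val_rev] at h1
  have := l.isLt
  omega

lemma rev_eq_iff' {a b : Fin (2*m)} : a.rev = b ↔ a = b.rev := by
  constructor <;> intro h <;> [rw [← h, Fin.rev_rev]; rw [h, Fin.rev_rev]]

lemma aD_eq_omega (m k : ℕ) (hm : 1 ≤ m) (hk : k ≤ m) (l : Fin (2*m)) :
    aD m k l = ((omegaD m (k:ℤ) l + omegaD m (-(k:ℤ)) l : ℤ) : ℝ) / 2 := by
  have hl := l.isLt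
  rcases Nat.eq_zero_or_pos k with hk0 | hk1
  · subst hk0
    have hc : ¬ (((l:ℕ):ℤ) < (0:ℤ) % (2 * (m:ℤ))) := by
      intro h; rw [Int.zero_emod] at h; omega
    simp only [omegaD, aD, Nat.cast_zero, neg_zero, hc, if_neg, Int.zero_ediv]
    norm_num
  · have hmod : (k:ℤ) % (2*(m:ℤ)) = k := Int.emod_eq_of_lt (by positivity) (by omega)
    have hdiv : (k:ℤ) / (2*(m:ℤ)) = 0 := Int.ediv_eq_zero_of_lt (by positivity) (by omega)
    have hmod2 : (-(k:ℤ)) % (2*(m:ℤ)) = 2*(m:ℤ) - k := by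
      have he : (-(k:ℤ)) = (2*(m:ℤ) - k) + (2*(m:ℤ)) * (-1) := by ring
      rw [he, Int.add_mul_emod_self_left, Int.emod_eq_of_lt (by omega) (by omega)]
    have hdiv2 : (-(k:ℤ)) / (2*(m:ℤ)) = -1 := by
      have he : (-(k:ℤ)) = (2*(m:ℤ) - k) + (2*(m:ℤ)) * (-1) := by ring
      rw [he, Int.add_mul_ediv_left _ _ (by omega : (2*(m:ℤ)) ≠ 0),
        Int.ediv_eq_zero_of_lt (by omega) (by omega)]
      ring
    simp only [omegaD, aD, hmod, hdiv, hmod2, hdiv2]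
    split_ifs with h1 h2 h3 h4 h5 h6 h7
    all_goals try norm_num
    all_goals omega

lemma aD_add_rev (k : ℕ) (hk : k ≤ m) (l : Fin (2*m)) :
    aD m k l + aD m k l.rev = 0 := by
  have hl := l.isLt
  have hr := val_rev l
  simp only [aD, hr]
  split_ifs
  all_goals try norm_num
  all_goals omega

lemma aD_apart (k : ℕ) (hk : k ≤ m) : InApartR m (aD m k) := by
  intro l l'
  rw [aD_add_rev k hk, aD_add_rev k hk]

lemma nu_eq_act (hm : 1 ≤ m) (k : ℕ) (hk : k ≤ m) (t : VecZ m) (σ : Equiv.Perm (Fin (2*m)))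
    (l : Fin (2*m)) :
    nuD m t σ (k:ℤ) l = actR m t σ (aD m k) l - aD m k l := by
  unfold nuD muD actR
  rw [aD_eq_omega m k hm hk, aD_eq_omega m k hm hk]
  push_cast
  ring

lemma aD_cases (k : ℕ) (hk : k ≤ m) (l : Fin (2*m)) :
    (memB m k l ∧ aD m k l = 0) ∨
      (¬ memB m k l ∧ (aD m k l = -(1/2) ∨ aD m k l = 1/2)) := by
  have hl := l.isLt
  unfold aD memB
  split_ifs with h1 h2
  · right; exact ⟨fun hB => by omega, Or.inl rfl⟩
  · left; exact ⟨⟨by omega, h2⟩, rfl⟩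
  · right; exact ⟨fun hB => by omega, Or.inr rfl⟩

lemma memAB_total (k : ℕ) (l : Fin (2*m)) : memA m k l ∨ memB m k l := by
  unfold memA memB; omega

lemma memA_not_B {k : ℕ} {l : Fin (2*m)} (h : memA m k l) : ¬ memB m k l := by
  unfold memA memB at *; omega

lemma memB_rev {k : ℕ} {l : Fin (2*m)} (h : memB m k l) : memB m k l.rev := by
  have hl := l.isLt
  have hr := val_rev l
  unfold memB at *; omega

lemma isIntVal_half_iff (z : ℤ) : IsIntVal ((z:ℝ)/2) ↔ Even z := by
  constructor
  · rintro ⟨w, hw⟩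
    have : (z:ℝ) = ((2*w : ℤ) : ℝ) := by push_cast; linarith
    have hz : z = 2*w := by exact_mod_cast this
    exact ⟨w, by omega⟩
  · rintro ⟨w, hw⟩
    exact ⟨w, by subst hw; push_cast; ring⟩

/-- contribution of an entry with doubled value `z` to the (SP2') count. -/
noncomputable def G (z : ℤ) : ℝ :=
  (if z = 4 then 1 else 0) + (if Even z then 0 else 1/4)

/-- contribution of a real entry to the (SP2') count. -/
noncomputable def Fc (x : ℝ) : ℝ :=
  (if x = 2 then 1 else 0) + (if IsIntVal x then 0 else 1/4)

lemma Fc_eq_G (z : ℤ) : Fc ((z:ℝ)/2) = G z := by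
  unfold Fc G
  have h1 : ((z:ℝ)/2 = 2) ↔ (z = 4) := by
    constructor
    · intro h
      have : (z:ℝ) = ((4:ℤ):ℝ) := by push_cast; linarith
      exact_mod_cast this
    · intro h; subst h; norm_num
  rw [if_congr h1 rfl rfl, if_congr (isIntVal_half_iff z) rfl rfl]

lemma keyIneq (zi zy : ℤ) (h1 : 1 ≤ zi) (h2 : zi ≤ 4) (h3 : zi ≤ zy) (h4 : zy ≤ 4) :
    G zi + G (4-zi) + G (zy-zi) + G (4-zy+zi) ≤ G 0 + G 4 + G zy + G (4-zy) := by
  interval_cases zi <;> interval_cases zy <;>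
    norm_num [G, Int.even_iff]

end Aux


section Aux2

variable {m : ℕ}

lemma corootD_rev_arg (i j l : Fin (2*m)) :
    corootD m i j l.rev = - corootD m i j l := by
  simp only [corootD, rev_eq_iff', Fin.rev_rev]
  by_cases h1 : l = i.rev <;> by_cases h2 : l = j.rev <;> by_cases h3 : l = j <;>
    by_cases h4 : l = i <;> simp [h1, h2, h3, h4] <;> ring

lemma corootD_add_rev (i j l : Fin (2*m)) :
    corootD m i j l + corootD m i j l.rev = 0 := by
  rw [corootD_rev_arg]; ring

lemma corootD_swap (i j l : Fin (2*m)) :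
    corootD m j i l = - corootD m i j l := by
  simp only [corootD]; ring

lemma corootD_star (i j l : Fin (2*m)) :
    corootD m i.rev j.rev l = - corootD m i j l := by
  simp only [corootD, Fin.rev_rev]; ring

lemma corootD_self {i j : Fin (2*m)} (hij : i ≠ j) (hijr : i ≠ j.rev) :
    corootD m i j i = 1 := by
  have hii : i ≠ i.rev := (rev_ne i).symm
  simp [corootD, hij, hijr, hii]

lemma corootD_snd {i j : Fin (2*m)} (hij : i ≠ j) (hjir : j ≠ i.rev) :
    corootD m i j j = -1 := by
  have hjj : j ≠ j.rev := (rev_ne j).symm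
  simp [corootD, hij.symm, hjir, hjj]

lemma corootD_fst_rev {i j : Fin (2*m)} (hij : i ≠ j) (hijr : i ≠ j.rev) :
    corootD m i j i.rev = -1 := by
  rw [corootD_rev_arg, corootD_self hij hijr]

lemma corootD_snd_rev {i j : Fin (2*m)} (hij : i ≠ j) (hjir : j ≠ i.rev) :
    corootD m i j j.rev = 1 := by
  rw [corootD_rev_arg, corootD_snd hij hjir]; ring

lemma corootD_zero {i j l : Fin (2*m)} (h1 : l ≠ i) (h2 : l ≠ j) (h3 : l ≠ i.rev)
    (h4 : l ≠ j.rev) : corootD m i j l = 0 := by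
  simp [corootD, h1, h2, h3, h4]

lemma corootD_sum_even (i j : Fin (2*m)) (hij : i ≠ j) (hjir : j ≠ i.rev) :
    Even (∑ l ∈ Finset.univ.filter (fun l : Fin (2*m) => (l:ℕ) < m), corootD m i j l) := by
  classical
  have hsum : ∀ b : Fin (2*m),
      (∑ l ∈ Finset.univ.filter (fun l : Fin (2*m) => (l:ℕ) < m),
        (if l = b then (1:ℤ) else 0)) = if (b:ℕ) < m then 1 else 0 := by
    intro b
    rw [Finset.sum_ite_eq' (Finset.univ.filter (fun l : Fin (2*m) => (l:ℕ) < m)) b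
      (fun _ => (1:ℤ))]
    simp
  have hexp : (∑ l ∈ Finset.univ.filter (fun l : Fin (2*m) => (l:ℕ) < m), corootD m i j l)
      = (if (i:ℕ) < m then (1:ℤ) else 0) - (if (j:ℕ) < m then 1 else 0)
        + (if (j.rev:ℕ) < m then 1 else 0) - (if (i.rev:ℕ) < m then 1 else 0) := by
    simp only [corootD]
    rw [← hsum i, ← hsum j, ← hsum j.rev, ← hsum i.rev]
    rw [← Finset.sum_sub_distrib, ← Finset.sum_add_distrib, ← Finset.sum_sub_distrib]
  rw [hexp]
  have hi := i.isLt
  have hj := j.isLt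
  have hir : ((i.rev:ℕ) < m) ↔ ¬ ((i:ℕ) < m) := by rw [val_rev]; omega
  have hjr : ((j.rev:ℕ) < m) ↔ ¬ ((j:ℕ) < m) := by rw [val_rev]; omega
  rw [if_congr hir rfl rfl, if_congr hjr rfl rfl]
  by_cases h1 : (i:ℕ) < m <;> by_cases h2 : (j:ℕ) < m <;>
    simp only [h1, h2, not_true_eq_false, not_false_eq_true, if_true, if_false] <;> decide

lemma isReflOf_swap {i j : Fin (2*m)} {d : ℤ} {t t' : VecZ m}
    {σ σ' : Equiv.Perm (Fin (2*m))} (h : IsReflOf m i j d t σ t' σ') :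
    IsReflOf m j i (-d) t σ t' σ' := by
  intro x hx l
  rw [h x hx l, corootD_swap]
  push_cast
  ring

lemma isReflOf_star {i j : Fin (2*m)} {d : ℤ} {t t' : VecZ m}
    {σ σ' : Equiv.Perm (Fin (2*m))} (ht : InXD m t) (hσ : InSO m σ)
    (h : IsReflOf m i j d t σ t' σ') :
    IsReflOf m i.rev j.rev (-d) t σ t' σ' := by
  intro x hx l
  have hσinv : ∀ a : Fin (2*m), σ⁻¹ a.rev = (σ⁻¹ a).rev := by
    intro a
    apply σ.injective
    have h2 := hσ.2 (σ⁻¹ a)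
    rw [show σ (σ⁻¹ a) = a from σ.apply_symm_apply a] at h2
    rw [show σ (σ⁻¹ a.rev) = a.rev from σ.apply_symm_apply a.rev, h2]
  have hj' : actR m t σ x j + actR m t σ x j.rev = actR m t σ x i + actR m t σ x i.rev := by
    unfold actR
    rw [hσinv, hσinv]
    have h1 : ((t j : ℤ) : ℝ) + ((t j.rev : ℤ) : ℝ) = ((t i : ℤ) : ℝ) + ((t i.rev : ℤ) : ℝ) := by
      exact_mod_cast ht j i
    have h2 := hx (σ⁻¹ j) (σ⁻¹ i)
    linarith
  rw [h x hx l, corootD_star]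
  push_cast
  linear_combination ((corootD m i j l : ℝ)) * hj'

lemma nu_refl {i j : Fin (2*m)} {d : ℤ} {t t' : VecZ m}
    {σ σ' : Equiv.Perm (Fin (2*m))} (hm : 1 ≤ m) (k : ℕ) (hk : k ≤ m)
    (hrefl : IsReflOf m i j d t σ t' σ') (l : Fin (2*m)) :
    nuD m t' σ' (k:ℤ) l = nuD m t σ (k:ℤ) l
      - (nuD m t σ (k:ℤ) i - nuD m t σ (k:ℤ) j + aD m k i - aD m k j - d)
        * (corootD m i j l : ℝ) := by
  have e := hrefl (aD m k) (aD_apart k hk) l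
  have e1 := nu_eq_act hm k hk t σ i
  have e2 := nu_eq_act hm k hk t σ j
  have e3 := nu_eq_act hm k hk t σ l
  have e4 := nu_eq_act hm k hk t' σ' l
  rw [e4, e, e3, e1, e2]
  ring

lemma sp2'_iff_sum {q : ℕ} {t : VecZ m} {σ : Equiv.Perm (Fin (2*m))} {k : ℤ} :
    SP2' m q t σ k ↔ ∑ l : Fin (2*m), Fc (nuD m t σ k l) ≤ (q:ℝ) := by
  unfold SP2'
  have hA : (({l : Fin (2*m) | nuD m t σ k l = 2}.ncard : ℕ) : ℝ)
      = ∑ l : Fin (2*m), (if nuD m t σ k l = 2 then (1:ℝ) else 0) := by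
    rw [Set.ncard_eq_toFinset_card', Set.toFinset_setOf, Finset.card_filter]
    push_cast
    rfl
  have hB : (({l : Fin (2*m) | ¬ IsIntVal (nuD m t σ k l)}.ncard : ℕ) : ℝ) / 4
      = ∑ l : Fin (2*m), (if IsIntVal (nuD m t σ k l) then (0:ℝ) else 1/4) := by
    rw [Set.ncard_eq_toFinset_card', Set.toFinset_setOf, Finset.card_filter]
    push_cast
    rw [Finset.sum_div]
    refine Finset.sum_congr rfl (fun l _ => ?_)
    split_ifs <;> norm_num
  rw [hA, hB, ← Finset.sum_add_distrib]
  rfl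

lemma sp2'_congr {q : ℕ} {t t' : VecZ m} {σ σ' : Equiv.Perm (Fin (2*m))} {k : ℤ}
    (h : ∀ l, nuD m t' σ' k l = nuD m t σ k l) :
    SP2' m q t σ k → SP2' m q t' σ' k := by
  intro h2
  rw [sp2'_iff_sum] at h2 ⊢
  calc ∑ l : Fin (2*m), Fc (nuD m t' σ' k l)
      = ∑ l : Fin (2*m), Fc (nuD m t σ k l) :=
        Finset.sum_congr rfl (fun l _ => by rw [h l])
    _ ≤ (q:ℝ) := h2

lemma nuCong_congr {q : ℕ} {t t' : VecZ m} {σ σ' : Equiv.Perm (Fin (2*m))} {k : ℤ}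
    (h : ∀ l, nuD m t' σ' k l = nuD m t σ k l) :
    NuCongQvee m q t σ k → NuCongQvee m q t' σ' k := by
  rintro ⟨y, hy, hyy⟩
  exact ⟨y, hy, fun l => by rw [h l, hyy l]⟩

lemma sp3'_congr {q k : ℕ} {t t' : VecZ m} {σ σ' : Equiv.Perm (Fin (2*m))}
    (h : ∀ l, nuD m t' σ' (k:ℤ) l = nuD m t σ (k:ℤ) l) :
    SP3' m q t σ k → SP3' m q t' σ' k := by
  intro h3 ⟨hint, hnc⟩
  obtain ⟨j₁, j₂, hA, hB, h1, h2⟩ := h3 ⟨fun l => by rw [← h l]; exact hint l,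
    fun hc => hnc (nuCong_congr (fun l => by rw [h l]) hc)⟩
  exact ⟨j₁, j₂, hA, hB, by rw [h j₁]; exact h1, by rw [h j₂]; exact h2⟩

lemma nuCong_shift {q : ℕ} {t t' : VecZ m} {σ σ' : Equiv.Perm (Fin (2*m))} {k : ℤ}
    {i j : Fin (2*m)} (hij : i ≠ j) (hjir : j ≠ i.rev) (w : ℤ)
    (hpt : ∀ l, nuD m t' σ' k l = nuD m t σ k l - (w:ℝ) * (corootD m i j l : ℝ)) :
    NuCongQvee m q t σ k → NuCongQvee m q t' σ' k := by
  rintro ⟨y, ⟨hy1, hy2⟩, hyy⟩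
  refine ⟨fun l => y l - w * corootD m i j l, ⟨?_, ?_⟩, ?_⟩
  · intro l
    have h1 := hy1 l
    have h2 := corootD_add_rev i j l
    linear_combination h1 - w * h2
  · have : (∑ l ∈ Finset.univ.filter (fun l : Fin (2*m) => (l:ℕ) < m),
        (y l - w * corootD m i j l))
        = (∑ l ∈ Finset.univ.filter (fun l : Fin (2*m) => (l:ℕ) < m), y l)
          - w * (∑ l ∈ Finset.univ.filter (fun l : Fin (2*m) => (l:ℕ) < m),
              corootD m i j l) := by
      rw [Finset.sum_sub_distrib, Finset.mul_sum]
    rw [this]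
    exact hy2.sub ((corootD_sum_even i j hij hjir).mul_left w)
  · intro l
    rw [hpt l, hyy l]
    push_cast
    ring

end Aux2


section Core

lemma core {m : ℕ} (hm : 2 ≤ m) (q : ℕ)
    (t : VecZ m) (σ : Equiv.Perm (Fin (2 * m)))
    (i j : Fin (2 * m)) (hji : j ≠ i) (hjir : j ≠ i.rev) (d : ℤ)
    (t' : VecZ m) (σ' : Equiv.Perm (Fin (2 * m)))
    (hrefl : IsReflOf m i j d t σ t' σ')
    (k : ℕ) (hk : k ≤ m)
    (hw1 : SP1' m t σ (k : ℤ)) (hw2 : SP2' m q t σ (k : ℤ)) (hw3 : SP3' m q t σ k)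
    (hs1 : SP1' m t' σ' (k : ℤ))
    (hfail : ¬ SP2' m q t' σ' (k : ℤ) ∨ ¬ SP3' m q t' σ' k) :
    nuD m t σ (k:ℤ) i ≠ 0 := by
  intro hni
  have hm1 : (1:ℕ) ≤ m := by omega
  have hij : i ≠ j := hji.symm
  have hijr : i ≠ j.rev := fun h => hjir (by rw [h, Fin.rev_rev])
  have hiir : i ≠ i.rev := (rev_ne i).symm
  have hjjr : j ≠ j.rev := (rev_ne j).symm
  have hirj : i.rev ≠ j := Ne.symm hjir
  have hirjr : i.rev ≠ j.rev := fun h => hij (Fin.rev_injective h)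
  set C : ℝ := nuD m t σ (k:ℤ) i - nuD m t σ (k:ℤ) j + aD m k i - aD m k j - (d:ℝ)
    with hCdef
  have hpt : ∀ l, nuD m t' σ' (k:ℤ) l
      = nuD m t σ (k:ℤ) l - C * (corootD m i j l : ℝ) :=
    fun l => nu_refl hm1 k hk hrefl l
  have hvi : nuD m t' σ' (k:ℤ) i = nuD m t σ (k:ℤ) i - C := by
    rw [hpt i, corootD_self hij hijr]; push_cast; ring
  have hvir : nuD m t' σ' (k:ℤ) i.rev = nuD m t σ (k:ℤ) i.rev + C := by
    rw [hpt i.rev, corootD_fst_rev hij hijr]; push_cast; ring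
  have hvj : nuD m t' σ' (k:ℤ) j = nuD m t σ (k:ℤ) j + C := by
    rw [hpt j, corootD_snd hij hjir]; push_cast; ring
  have hvjr : nuD m t' σ' (k:ℤ) j.rev = nuD m t σ (k:ℤ) j.rev - C := by
    rw [hpt j.rev, corootD_snd_rev hij hjir]; push_cast; ring
  set zi : ℤ := muD m t' σ' (k:ℤ) i + muD m t' σ' (-(k:ℤ)) i with hzidef
  have hνi' : nuD m t' σ' (k:ℤ) i = (zi:ℝ)/2 := rfl
  set zy : ℤ := muD m t σ (k:ℤ) j + muD m t σ (-(k:ℤ)) j with hzydef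
  have hνj : nuD m t σ (k:ℤ) j = (zy:ℝ)/2 := rfl
  have hC : C = -((zi:ℝ)/2) := by
    have h := hvi
    rw [hni, hνi'] at h
    linarith
  obtain ⟨hs1a, hs1b⟩ := hs1
  obtain ⟨hw1a, hw1b⟩ := hw1
  have h0i := (hs1b i).1
  have h2i := (hs1b i).2
  rw [hνi'] at h0i h2i
  have hzi0 : 0 ≤ zi := by exact_mod_cast (by linarith : (0:ℝ) ≤ (zi:ℝ))
  have hzi4 : zi ≤ 4 := by exact_mod_cast (by linarith : (zi:ℝ) ≤ 4)
  have hir2 : nuD m t σ (k:ℤ) i.rev = 2 := by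
    have h := hw1a i; rw [hni] at h; linarith
  have hjrv : nuD m t σ (k:ℤ) j.rev = 2 - nuD m t σ (k:ℤ) j := by
    have h := hw1a j; linarith
  have hzy4 : zy ≤ 4 := by
    have h := (hw1b j).2
    rw [hνj] at h
    exact_mod_cast (by linarith : (zy:ℝ) ≤ 4)
  have hzyzi : zi ≤ zy := by
    have h := (hs1b j).1
    rw [hvj, hνj, hC] at h
    exact_mod_cast (by linarith : (zi:ℝ) ≤ (zy:ℝ))
  by_cases hC0 : C = 0
  · have hEq : ∀ l, nuD m t' σ' (k:ℤ) l = nuD m t σ (k:ℤ) l := fun l => by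
      rw [hpt l, hC0]; ring
    rcases hfail with hf | hf
    · exact hf (sp2'_congr hEq hw2)
    · exact hf (sp3'_congr hEq hw3)
  have hzi1 : 1 ≤ zi := by
    have : zi ≠ 0 := fun h => hC0 (by rw [hC, h]; norm_num)
    omega
  rcases hfail with hf | hf
  · -- (SP2') fails for w'
    apply hf
    rw [sp2'_iff_sum] at hw2 ⊢
    refine le_trans ?_ hw2
    have hSsub : ({i, i.rev, j, j.rev} : Finset (Fin (2*m))) ⊆ Finset.univ :=
      Finset.subset_univ _
    rw [← Finset.sum_sdiff hSsub (f := fun l => Fc (nuD m t' σ' (k:ℤ) l)),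
        ← Finset.sum_sdiff hSsub (f := fun l => Fc (nuD m t σ (k:ℤ) l))]
    have hoff : ∀ l ∈ Finset.univ \ ({i, i.rev, j, j.rev} : Finset (Fin (2*m))),
        Fc (nuD m t' σ' (k:ℤ) l) = Fc (nuD m t σ (k:ℤ) l) := by
      intro l hl
      simp only [Finset.mem_sdiff, Finset.mem_insert, Finset.mem_singleton] at hl
      push_neg at hl
      obtain ⟨-, h1, h2, h3, h4⟩ := hl
      rw [hpt l, corootD_zero h1 h3 h2 h4]
      norm_num
    rw [Finset.sum_congr rfl hoff]
    apply add_le_add le_rfl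
    have hmem1 : i ∉ ({i.rev, j, j.rev} : Finset (Fin (2*m))) := by
      simp [hiir, hij, hijr]
    have hmem2 : i.rev ∉ ({j, j.rev} : Finset (Fin (2*m))) := by
      simp [hirj, hirjr]
    have hmem3 : j ∉ ({j.rev} : Finset (Fin (2*m))) := by simp [hjjr]
    rw [Finset.sum_insert hmem1, Finset.sum_insert hmem2, Finset.sum_insert hmem3,
        Finset.sum_singleton, Finset.sum_insert hmem1, Finset.sum_insert hmem2,
        Finset.sum_insert hmem3, Finset.sum_singleton]
    have e1 : nuD m t σ (k:ℤ) i = ((0:ℤ):ℝ)/2 := by rw [hni]; norm_num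
    have e2 : nuD m t σ (k:ℤ) i.rev = ((4:ℤ):ℝ)/2 := by rw [hir2]; norm_num
    have e4 : nuD m t σ (k:ℤ) j.rev = (((4:ℤ) - zy :ℤ):ℝ)/2 := by
      rw [hjrv, hνj]; push_cast; ring
    have e2' : nuD m t' σ' (k:ℤ) i.rev = (((4:ℤ) - zi :ℤ):ℝ)/2 := by
      rw [hvir, hir2, hC]; push_cast; ring
    have e3' : nuD m t' σ' (k:ℤ) j = ((zy - zi :ℤ):ℝ)/2 := by
      rw [hvj, hνj, hC]; push_cast; ring
    have e4' : nuD m t' σ' (k:ℤ) j.rev = (((4:ℤ) - zy + zi :ℤ):ℝ)/2 := by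
      rw [hvjr, hjrv, hνj, hC]; push_cast; ring
    rw [hνi', e2', e3', e4', e1, e2, hνj, e4]
    rw [Fc_eq_G, Fc_eq_G, Fc_eq_G, Fc_eq_G, Fc_eq_G, Fc_eq_G, Fc_eq_G, Fc_eq_G]
    have hkey := keyIneq zi zy hzi1 hzi4 hzyzi hzy4
    linarith
  · -- (SP3') fails for w'
    unfold SP3' at hf
    push_neg at hf
    obtain ⟨⟨hint', hnc'⟩, hnopair⟩ := hf
    obtain ⟨w, hwz⟩ := (isIntVal_half_iff zi).mp (by rw [← hνi']; exact hint' i)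
    have hCw : C = -((w:ℤ):ℝ) := by rw [hC, hwz]; push_cast; ring
    have hw12 : w = 1 ∨ w = 2 := by omega
    have hintall : ∀ l, IsIntVal (nuD m t σ (k:ℤ) l) := by
      intro l
      obtain ⟨z, hz⟩ := hint' l
      refine ⟨z - w * corootD m i j l, ?_⟩
      have h := hpt l
      rw [hz, hCw] at h
      push_cast at h ⊢
      linarith
    have hptw : ∀ l, nuD m t' σ' (k:ℤ) l
        = nuD m t σ (k:ℤ) l - (((-w : ℤ)):ℝ) * (corootD m i j l : ℝ) := by
      intro l; rw [hpt l, hCw]; push_cast; ring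
    have hnc : ¬ NuCongQvee m q t σ (k:ℤ) :=
      fun hcg => hnc' (nuCong_shift hij hjir (-w) hptw hcg)
    obtain ⟨j₁, j₂, hA1, hB2, h11, h12⟩ := hw3 ⟨hintall, hnc⟩
    have h0j' := (hs1b j).1
    rcases hw12 with hw1' | hw2'
    · -- C = -1
      subst hw1'
      obtain ⟨zj, hzj⟩ := hintall j
      have hzj12 : zj = 1 ∨ zj = 2 := by
        have hub := (hw1b j).2
        rw [hzj] at hub
        have hlb := h0j'
        rw [hvj, hzj, hCw] at hlb
        push_cast at hlb
        have h1 : (1:ℤ) ≤ zj := by exact_mod_cast (by linarith : (1:ℝ) ≤ (zj:ℝ))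
        have h2 : zj ≤ 2 := by exact_mod_cast (by linarith : (zj:ℝ) ≤ 2)
        omega
      have hν'i1 : nuD m t' σ' (k:ℤ) i = 1 := by
        rw [hvi, hni, hCw]; push_cast; ring
      rcases hzj12 with hzj1 | hzj2
      · -- ν(j) = 1
        have hνj1 : nuD m t σ (k:ℤ) j = 1 := by rw [hzj, hzj1]; norm_num
        have hνjr1 : nuD m t σ (k:ℤ) j.rev = 1 := by rw [hjrv, hνj1]; norm_num
        have hadiff : aD m k i - aD m k j = (d:ℝ) := by
          have h := hCdef
          rw [hni, hνj1, hCw] at h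
          push_cast at h
          linarith
        have hBij : memB m k i ↔ memB m k j := by
          rcases aD_cases k hk i with ⟨hBi, hai⟩ | ⟨hBi, hai⟩ <;>
            rcases aD_cases k hk j with ⟨hBj, haj⟩ | ⟨hBj, haj⟩
          · exact iff_of_true hBi hBj
          · exfalso
            rcases haj with h | h <;> rw [hai, h] at hadiff <;>
              [ (have : (2*d:ℤ) = 1 := by exact_mod_cast (by linarith : (2:ℝ)*(d:ℝ) = 1);
                 omega);
                (have : (2*d:ℤ) = -1 := by exact_mod_cast (by linarith : (2:ℝ)*(d:ℝ) = -1);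
                 omega) ]
          · exfalso
            rcases hai with h | h <;> rw [h, haj] at hadiff <;>
              [ (have : (2*d:ℤ) = -1 := by exact_mod_cast (by linarith : (2:ℝ)*(d:ℝ) = -1);
                 omega);
                (have : (2*d:ℤ) = 1 := by exact_mod_cast (by linarith : (2:ℝ)*(d:ℝ) = 1);
                 omega) ]
          · exact iff_of_false hBi hBj
        by_cases hjB : memB m k j
        · have hiB : memB m k i := hBij.mpr hjB
          have hn1 : j₁ ≠ i := fun h => (memA_not_B hA1) (h ▸ hiB)
          have hn2 : j₁ ≠ i.rev := fun h => (memA_not_B hA1) (h ▸ memB_rev hiB)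
          have hn3 : j₁ ≠ j := fun h => (memA_not_B hA1) (h ▸ hjB)
          have hn4 : j₁ ≠ j.rev := fun h => (memA_not_B hA1) (h ▸ memB_rev hjB)
          have hv1 : nuD m t' σ' (k:ℤ) j₁ = 1 := by
            rw [hpt j₁, corootD_zero hn1 hn3 hn2 hn4, h11]; norm_num
          exact hnopair j₁ i hA1 hiB hv1 hν'i1
        · have hiB : ¬ memB m k i := fun h => hjB (hBij.mp h)
          have hiA : memA m k i := (memAB_total k i).resolve_right hiB
          have hn1 : j₂ ≠ i := fun h => hiB (h ▸ hB2)
          have hn2 : j₂ ≠ i.rev := fun h => hiB (by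
            rw [← Fin.rev_rev i]; exact memB_rev (h ▸ hB2))
          have hn3 : j₂ ≠ j := fun h => hjB (h ▸ hB2)
          have hn4 : j₂ ≠ j.rev := fun h => hjB (by
            rw [← Fin.rev_rev j]; exact memB_rev (h ▸ hB2))
          have hv2 : nuD m t' σ' (k:ℤ) j₂ = 1 := by
            rw [hpt j₂, corootD_zero hn1 hn3 hn2 hn4, h12]; norm_num
          exact hnopair i j₂ hiA hB2 hν'i1 hv2
      · -- ν(j) = 2
        have hνj2 : nuD m t σ (k:ℤ) j = 2 := by rw [hzj, hzj2]; norm_num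
        have hνjr0 : nuD m t σ (k:ℤ) j.rev = 0 := by rw [hjrv, hνj2]; norm_num
        have hgen : ∀ l, nuD m t σ (k:ℤ) l = 1 → nuD m t' σ' (k:ℤ) l = 1 := by
          intro l hl
          have hn1 : l ≠ i := fun h => by rw [h, hni] at hl; norm_num at hl
          have hn2 : l ≠ i.rev := fun h => by rw [h, hir2] at hl; norm_num at hl
          have hn3 : l ≠ j := fun h => by rw [h, hνj2] at hl; norm_num at hl
          have hn4 : l ≠ j.rev := fun h => by rw [h, hνjr0] at hl; norm_num at hl
          rw [hpt l, corootD_zero hn1 hn3 hn2 hn4, hl]; norm_num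
        exact hnopair j₁ j₂ hA1 hB2 (hgen j₁ h11) (hgen j₂ h12)
    · -- C = -2
      subst hw2'
      have hνj2 : nuD m t σ (k:ℤ) j = 2 := by
        have hub := (hw1b j).2
        have hlb := h0j'
        rw [hvj, hCw] at hlb
        push_cast at hlb
        linarith
      have hνjr0 : nuD m t σ (k:ℤ) j.rev = 0 := by rw [hjrv, hνj2]; norm_num
      have hgen : ∀ l, nuD m t σ (k:ℤ) l = 1 → nuD m t' σ' (k:ℤ) l = 1 := by
        intro l hl
        have hn1 : l ≠ i := fun h => by rw [h, hni] at hl; norm_num at hl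
        have hn2 : l ≠ i.rev := fun h => by rw [h, hir2] at hl; norm_num at hl
        have hn3 : l ≠ j := fun h => by rw [h, hνj2] at hl; norm_num at hl
        have hn4 : l ≠ j.rev := fun h => by rw [h, hνjr0] at hl; norm_num at hl
        rw [hpt l, corootD_zero hn1 hn3 hn2 hn4, hl]; norm_num
      exact hnopair j₁ j₂ hA1 hB2 (hgen j₁ h11) (hgen j₂ h12)

end Core


lemma final_cases {x : ℝ} {z : ℤ} (hx : x = (z:ℝ)/2) (h0 : 0 ≤ x) (h2 : x ≤ 2)
    (hne0 : x ≠ 0) (hne2 : x ≠ 2) : x = 1/2 ∨ x = 1 ∨ x = 3/2 := by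
  subst hx
  have hz0 : 0 ≤ z := by exact_mod_cast (by linarith : (0:ℝ) ≤ (z:ℝ))
  have hz4 : z ≤ 4 := by exact_mod_cast (by linarith : (z:ℝ) ≤ 4)
  interval_cases z
  · exact absurd (by norm_num) hne0
  · left; norm_num
  · right; left; norm_num
  · right; right; norm_num
  · exact absurd (by norm_num) hne2

theorem statement16 (m q : ℕ) (hm : 2 ≤ m) (hq : q ≤ m - 1)
    (t : VecZ m) (σ : Equiv.Perm (Fin (2 * m))) (ht : InXD m t) (hσ : InSO m σ)
    (i j : Fin (2 * m)) (hji : j ≠ i) (hjir : j ≠ i.rev) (d : ℤ)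
    (t' : VecZ m) (σ' : Equiv.Perm (Fin (2 * m))) (ht' : InXD m t') (hσ' : InSO m σ')
    (hrefl : IsReflOf m i j d t σ t' σ')
    (k : ℕ) (hk : k ≤ m)
    (hw1 : SP1' m t σ (k : ℤ)) (hw2 : SP2' m q t σ (k : ℤ)) (hw3 : SP3' m q t σ k)
    (hs1 : SP1' m t' σ' (k : ℤ))
    (hfail : ¬ SP2' m q t' σ' (k : ℤ) ∨ ¬ SP3' m q t' σ' k) :
    (nuD m t σ (k : ℤ) i = 1 / 2 ∨ nuD m t σ (k : ℤ) i = 1 ∨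
      nuD m t σ (k : ℤ) i = 3 / 2) ∧
    (nuD m t σ (k : ℤ) j = 1 / 2 ∨ nuD m t σ (k : ℤ) j = 1 ∨
      nuD m t σ (k : ℤ) j = 3 / 2) := by
  have hm1 : (1:ℕ) ≤ m := by omega
  have hij : i ≠ j := hji.symm
  have hijr : i ≠ j.rev := fun h => hjir (by rw [h, Fin.rev_rev])
  have hjri : j.rev ≠ i := fun h => hijr h.symm
  have hjrir : j.rev ≠ i.rev := fun h => hji (Fin.rev_injective h)
  have hirjr : i.rev ≠ j.rev := Ne.symm hjrir
  have hirj : i.rev ≠ j := Ne.symm hjir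
  have hrefl_swap : IsReflOf m j i (-d) t σ t' σ' := isReflOf_swap hrefl
  have hrefl_star : IsReflOf m i.rev j.rev (-d) t σ t' σ' := isReflOf_star ht hσ hrefl
  have hrefl_swapstar : IsReflOf m j.rev i.rev d t σ t' σ' := by
    have h := isReflOf_star ht hσ hrefl_swap
    rw [neg_neg] at h
    exact h
  have h1 : nuD m t σ (k:ℤ) i ≠ 0 :=
    core hm q t σ i j hji hjir d t' σ' hrefl k hk hw1 hw2 hw3 hs1 hfail
  have h2 : nuD m t σ (k:ℤ) j ≠ 0 :=
    core hm q t σ j i hij hijr (-d) t' σ' hrefl_swap k hk hw1 hw2 hw3 hs1 hfail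
  have h3 : nuD m t σ (k:ℤ) i.rev ≠ 0 :=
    core hm q t σ i.rev j.rev hjrir (by rw [Fin.rev_rev]; exact hjri) (-d) t' σ'
      hrefl_star k hk hw1 hw2 hw3 hs1 hfail
  have h4 : nuD m t σ (k:ℤ) j.rev ≠ 0 :=
    core hm q t σ j.rev i.rev hirjr (by rw [Fin.rev_rev]; exact hirj) d t' σ'
      hrefl_swapstar k hk hw1 hw2 hw3 hs1 hfail
  obtain ⟨hw1a, hw1b⟩ := hw1
  have hine2 : nuD m t σ (k:ℤ) i ≠ 2 := by
    intro h
    apply h3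
    have := hw1a i
    linarith
  have hjne2 : nuD m t σ (k:ℤ) j ≠ 2 := by
    intro h
    apply h4
    have := hw1a j
    linarith
  constructor
  · exact final_cases rfl (hw1b i).1 (hw1b i).2 h1 hine2
  · exact final_cases rfl (hw1b j).1 (hw1b j).2 h2 hjne2

end TypeD
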